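/- Let N ≥ 2, 𝒩 = {1,...,N}, let T be an N × N real matrix with T_{ij} > 0 for all i, j ∈ 𝒩, and let x be a strictly positive vector in ℝ^𝒩. Let u, v ∈ ℝ^𝒩 have nonnegative entries with max_{i∈𝒩} u_i = 1, max_{i∈𝒩} v_i = 1, and u_i v_i = 0 for all i. Then log( max_{i∈𝒩} u_i (Tx)_i ) + log( max_{j∈𝒩} v_j / (Tx)_j ) ≤ log( max_{i,j∈𝒩} u_i v_j (max_{k∈𝒩} T_{ik}) / (min_{k∈𝒩} T_{jk}) ). -/

import Mathlib

open Filter Topology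

/-- the horofunction bound (5.1) of the paper for a positive
matrix acting on a strictly positive vector. -/
theorem horofunction_bound_positive_matrix (N : ℕ) (hN : 2 ≤ N)
    (T : Matrix (Fin N) (Fin N) ℝ) (hT : ∀ i j, 0 < T i j)
    (x : Fin N → ℝ) (hx : ∀ i, 0 < x i)
    (u v : Fin N → ℝ) (hu : ∀ i, 0 ≤ u i) (hv : ∀ i, 0 ≤ v i)
    (hu1 : (⨆ i, u i) = 1) (hv1 : (⨆ i, v i) = 1)
    (huv : ∀ i, u i * v i = 0) :
    Real.log (⨆ i, u i * T.mulVec x i) + Real.log (⨆ j, v j / T.mulVec x j)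
      ≤ Real.log (⨆ i, ⨆ j, u i * v j * ((⨆ k, T i k) / ⨅ k, T j k)) := by
  have hne : Nonempty (Fin N) := ⟨⟨0, by omega⟩⟩
  have hbdd : ∀ f : Fin N → ℝ, BddAbove (Set.range f) :=
    fun f => (Set.finite_range f).bddAbove
  have hbddb : ∀ f : Fin N → ℝ, BddBelow (Set.range f) :=
    fun f => (Set.finite_range f).bddBelow
  set w := T.mulVec x with hw
  have hwpos : ∀ i, 0 < w i := by
    intro i
    have : 0 < ∑ k, T i k * x k :=
      Finset.sum_pos (fun k _ => mul_pos (hT i k) (hx k)) Finset.univ_nonempty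
    simpa [hw, Matrix.mulVec, dotProduct] using this
  have hS : 0 < ∑ k, x k := Finset.sum_pos (fun k _ => hx k) Finset.univ_nonempty
  -- min/max of rows
  have hmaxpos : ∀ i, 0 < ⨆ k, T i k := fun i =>
    lt_of_lt_of_le (hT i ⟨0, by omega⟩) (le_ciSup (hbdd _) _)
  have hminpos : ∀ j, 0 < ⨅ k, T j k := by
    intro j
    obtain ⟨k, hk⟩ := Finite.exists_min (fun k => T j k)
    exact lt_of_lt_of_le (hT j k) (le_ciInf hk)
  -- bounds on w
  have hwle : ∀ i, w i ≤ (⨆ k, T i k) * ∑ k, x k := by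
    intro i
    have : ∑ k, T i k * x k ≤ ∑ k, (⨆ k', T i k') * x k :=
      Finset.sum_le_sum fun k _ =>
        mul_le_mul_of_nonneg_right (le_ciSup (hbdd _) k) (hx k).le
    simpa [hw, Matrix.mulVec, dotProduct, Finset.mul_sum] using this
  have hwge : ∀ j, (⨅ k, T j k) * ∑ k, x k ≤ w j := by
    intro j
    have : ∑ k, (⨅ k', T j k') * x k ≤ ∑ k, T j k * x k :=
      Finset.sum_le_sum fun k _ =>
        mul_le_mul_of_nonneg_right (ciInf_le (hbddb _) k) (hx k).le
    simpa [hw, Matrix.mulVec, dotProduct, Finset.mul_sum] using this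
  -- key pointwise bound
  have key : ∀ i j, u i * w i * (v j / w j)
      ≤ u i * v j * ((⨆ k, T i k) / ⨅ k, T j k) := by
    intro i j
    have h1 : u i * w i * (v j / w j) = u i * v j * (w i / w j) := by
      field_simp
    rw [h1]
    refine mul_le_mul_of_nonneg_left ?_ (mul_nonneg (hu i) (hv j))
    have h2 : w i / w j ≤ ((⨆ k, T i k) * ∑ k, x k) / ((⨅ k, T j k) * ∑ k, x k) :=
      div_le_div₀ (mul_nonneg (hmaxpos i).le hS.le) (hwle i)
        (mul_pos (hminpos j) hS) (hwge j)
    rwa [mul_div_mul_right _ _ hS.ne'] at h2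
  -- C is nonneg (indeed positive)
  obtain ⟨i0, hi0⟩ := exists_eq_ciSup_of_finite (f := u)
  obtain ⟨j0, hj0⟩ := exists_eq_ciSup_of_finite (f := v)
  have hui0 : u i0 = 1 := by rw [hi0, hu1]
  have hvj0 : v j0 = 1 := by rw [hj0, hv1]
  set C := ⨆ i, ⨆ j, u i * v j * ((⨆ k, T i k) / ⨅ k, T j k) with hC
  have hCmem : ∀ i j, u i * v j * ((⨆ k, T i k) / ⨅ k, T j k) ≤ C := by
    intro i j
    exact le_trans (le_ciSup (hbdd fun j => u i * v j * ((⨆ k, T i k) / ⨅ k, T j k)) j)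
      (le_ciSup (f := fun i => ⨆ j, u i * v j * ((⨆ k, T i k) / ⨅ k, T j k)) (hbdd _) i)
  have hCpos : 0 < C := by
    refine lt_of_lt_of_le ?_ (hCmem i0 j0)
    rw [hui0, hvj0]
    have := div_pos (hmaxpos i0) (hminpos j0)
    linarith
  -- positivity of A and B
  set A := ⨆ i, u i * w i with hA
  set B := ⨆ j, v j / w j with hB
  have hApos : 0 < A :=
    lt_of_lt_of_le (by rw [hui0] at *; simpa using hwpos i0)
      (le_ciSup (hbdd fun i => u i * w i) i0)
  have hBpos : 0 < B :=
    lt_of_lt_of_le (by rw [hvj0] at *; simpa using div_pos one_pos (hwpos j0))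
      (le_ciSup (hbdd fun j => v j / w j) j0)
  -- A * B ≤ C
  have hAB : A * B ≤ C := by
    rw [← le_div_iff₀ hBpos]
    refine ciSup_le fun i => ?_
    rcases eq_or_lt_of_le (hu i) with h0 | h0
    · rw [← h0, zero_mul]
      positivity
    · have hwi : 0 < u i * w i := mul_pos h0 (hwpos i)
      have : B ≤ C / (u i * w i) := by
        refine ciSup_le fun j => ?_
        rw [le_div_iff₀ hwi]
        calc v j / w j * (u i * w i) = u i * w i * (v j / w j) := by ring
          _ ≤ _ := key i j
          _ ≤ C := hCmem i j
      rw [le_div_iff₀ hBpos]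
      calc u i * w i * B ≤ u i * w i * (C / (u i * w i)) :=
            mul_le_mul_of_nonneg_left this hwi.le
        _ = C := mul_div_cancel₀ C hwi.ne'
  calc Real.log A + Real.log B = Real.log (A * B) :=
        (Real.log_mul hApos.ne' hBpos.ne').symm
    _ ≤ Real.log C := Real.log_le_log (mul_pos hApos hBpos) hAB
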